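/- Let (ω₀, Ω₀) ∈ ℝⁿ × ℝ satisfy the Melnikov-type Diophantine conditions |⟨ω₀, k⟩ + l·Ω₀| ≥ α/|k|^τ for all k ∈ ℤⁿ∖{0}, |l| ≤ 2, and |l·Ω₀| ≥ α for 1 ≤ |l| ≤ 2 (i.e. (ω₀, Ω₀) ∈ Õ_{α,τ} with n̄ = 1). Define I*_σ = {λ ∈ [−σ,σ] : ((1+λ)ω₀, Ω₀) ∈ Õ_{α/2, 2τ+1}}. Then for sufficiently small σ > 0, I*_σ is non-empty and meas([−σ,σ] ∖ I*_σ) ≤ c σ (σ/α)^{(τ−n+1)/τ}. -/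

import Mathlib

open MeasureTheory


private lemma rpow_step {s a : ℝ} (hs : 1 < s) (ha : 1 ≤ a) :
    (s - 1) * (a + 1) ^ (-s) ≤ a ^ (1 - s) - (a + 1) ^ (1 - s) := by
  have ha0 : (0:ℝ) < a := lt_of_lt_of_le one_pos ha
  obtain ⟨c, hc, hder⟩ := exists_hasDerivAt_eq_slope (fun x : ℝ => x ^ (1 - s))
      (fun x => (1 - s) * x ^ (1 - s - 1)) (by linarith : a < a + 1)
      (fun x hx => (Real.continuousAt_rpow_const x (1 - s)
        (Or.inl (by rcases hx with ⟨h1, _⟩; intro h; rw [h] at h1; linarith))).continuousWithinAt)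
      (fun x hx => Real.hasDerivAt_rpow_const
        (Or.inl (by rcases hx with ⟨h1, _⟩; intro h; rw [h] at h1; linarith)))
  have hc0 : 0 < c := lt_trans ha0 hc.1
  have h1 : (1 - s) * c ^ (1 - s - 1) = (a + 1) ^ (1 - s) - a ^ (1 - s) := by
    rw [hder]; rw [show a + 1 - a = 1 by ring, div_one]
  have h2 : (a + 1) ^ (-s) ≤ c ^ (-s) :=
    Real.rpow_le_rpow_of_nonpos hc0 hc.2.le (by linarith)
  have h3 : c ^ (1 - s - 1) = c ^ (-s) := by norm_num
  rw [h3] at h1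
  nlinarith [h2, h1]

private lemma sum_Ico_rpow_le {s : ℝ} (hs : 1 < s) (M : ℕ) (hM : 1 ≤ M) (N : ℕ) :
    ∑ m ∈ Finset.Ico M N, ((m : ℝ)) ^ (-s) ≤ (M : ℝ) ^ (-s) + (M : ℝ) ^ (1 - s) / (s - 1) := by
  have hs1 : (0:ℝ) < s - 1 := by linarith
  have key : ∀ j : ℕ, ∑ m ∈ Finset.Ico M (M + 1 + j), ((m : ℝ)) ^ (-s)
      ≤ (M : ℝ) ^ (-s) + ((M : ℝ) ^ (1 - s) - ((M + j : ℕ) : ℝ) ^ (1 - s)) / (s - 1) := by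
    intro j
    induction j with
    | zero =>
      rw [show M + 1 + 0 = M + 1 from rfl, Finset.Ico_add_one_right_eq_Icc, Finset.Icc_self, Finset.sum_singleton]
      simp
    | succ j ih =>
      rw [show M + 1 + (j + 1) = (M + 1 + j) + 1 by ring,
        Finset.sum_Ico_succ_top (by omega : M ≤ M + 1 + j)]
      have ha : (1:ℝ) ≤ ((M + j : ℕ) : ℝ) := by
        have : (1:ℕ) ≤ M + j := by omega
        exact_mod_cast this
      have step := rpow_step hs ha
      have hcast : ((M + 1 + j : ℕ) : ℝ) = ((M + j : ℕ) : ℝ) + 1 := by push_cast; ring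
      have hcast2 : ((M + (j + 1) : ℕ) : ℝ) = ((M + j : ℕ) : ℝ) + 1 := by push_cast; ring
      rw [hcast, hcast2]
      have step' : (((M + j : ℕ) : ℝ) + 1) ^ (-s)
          ≤ (((M + j : ℕ) : ℝ) ^ (1 - s) - (((M + j : ℕ) : ℝ) + 1) ^ (1 - s)) / (s - 1) := by
        rw [le_div_iff₀ hs1]; nlinarith [step]
      exact le_trans (add_le_add ih step') (le_of_eq (by ring))
  have hsub : ∑ m ∈ Finset.Ico M N, ((m : ℝ)) ^ (-s)
      ≤ ∑ m ∈ Finset.Ico M (M + 1 + N), ((m : ℝ)) ^ (-s) := by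
    apply Finset.sum_le_sum_of_subset_of_nonneg
    · apply Finset.Ico_subset_Ico le_rfl; omega
    · intro i _ _; positivity
  refine le_trans (le_trans hsub (key N)) ?_
  gcongr
  have : (0:ℝ) ≤ ((M + N : ℕ) : ℝ) ^ (1 - s) := by positivity
  linarith

private lemma tsum_tail_le {s K C : ℝ} (hs : 1 < s) (hK : 1 ≤ K) (hC : 0 ≤ C) :
    ∑' m : ℕ, (if K < (m : ℝ) then ENNReal.ofReal (C * (m : ℝ) ^ (-s)) else 0)
      ≤ ENNReal.ofReal (C * (K ^ (-s) + K ^ (1 - s) / (s - 1))) := by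
  have hK0 : (0:ℝ) < K := lt_of_lt_of_le one_pos hK
  rw [ENNReal.tsum_eq_iSup_sum]
  apply iSup_le
  intro F
  classical
  set M : ℕ := ⌊K⌋₊ + 1 with hMdef
  have hM1 : 1 ≤ M := by omega
  have hKM : K < (M : ℝ) := by
    have := Nat.lt_floor_add_one K
    push_cast [hMdef]; push_cast at this; linarith
  calc ∑ m ∈ F, (if K < (m : ℝ) then ENNReal.ofReal (C * (m : ℝ) ^ (-s)) else 0)
      = ∑ m ∈ F.filter (fun m : ℕ => K < (m : ℝ)), ENNReal.ofReal (C * (m : ℝ) ^ (-s)) := by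
        rw [Finset.sum_filter]
    _ = ENNReal.ofReal (∑ m ∈ F.filter (fun m : ℕ => K < (m : ℝ)), C * (m : ℝ) ^ (-s)) := by
        rw [ENNReal.ofReal_sum_of_nonneg]
        intro i _; positivity
    _ ≤ ENNReal.ofReal (C * (K ^ (-s) + K ^ (1 - s) / (s - 1))) := by
        apply ENNReal.ofReal_le_ofReal
        rw [← Finset.mul_sum]
        apply mul_le_mul_of_nonneg_left _ hC
        have hsubset : F.filter (fun m : ℕ => K < (m : ℝ)) ⊆ Finset.Ico M (F.sup id + 1) := by
          intro m hm
          rw [Finset.mem_filter] at hm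
          rw [Finset.mem_Ico]
          constructor
          · have : ⌊K⌋₊ < m := (Nat.floor_lt hK0.le).mpr hm.2
            omega
          · have : m ≤ F.sup id := Finset.le_sup (f := id) hm.1
            omega
        have h1 : ∑ m ∈ F.filter (fun m : ℕ => K < (m : ℝ)), ((m : ℝ)) ^ (-s)
            ≤ ∑ m ∈ Finset.Ico M (F.sup id + 1), ((m : ℝ)) ^ (-s) := by
          apply Finset.sum_le_sum_of_subset_of_nonneg hsubset
          intro i _ _; positivity
        refine le_trans h1 (le_trans (sum_Ico_rpow_le hs M hM1 _) ?_)
        have e1 : (M : ℝ) ^ (-s) ≤ K ^ (-s) :=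
          Real.rpow_le_rpow_of_nonpos hK0 hKM.le (by linarith)
        have e2 : (M : ℝ) ^ (1 - s) ≤ K ^ (1 - s) :=
          Real.rpow_le_rpow_of_nonpos hK0 hKM.le (by linarith)
        exact add_le_add e1 ((div_le_div_iff_of_pos_right (by linarith)).mpr e2)


private lemma card_sphere_le (n' m : ℕ) :
    ((Fintype.piFinset (fun _ : Fin (n' + 1) => Finset.Icc (-(m : ℤ)) (m : ℤ))).filter
      (fun k => ∑ i, (k i).natAbs = m)).card ≤ 2 * (2 * m + 1) ^ n' := by
  classical
  set Fm := (Fintype.piFinset (fun _ : Fin (n' + 1) => Finset.Icc (-(m : ℤ)) (m : ℤ))).filter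
      (fun k => ∑ i, (k i).natAbs = m) with hFm
  set T := (Fintype.piFinset (fun _ : Fin n' => Finset.Icc (-(m : ℤ)) (m : ℤ))) ×ˢ
      (Finset.univ : Finset Bool) with hT
  have hmap : ∀ k ∈ Fm, ((fun i : Fin n' => k i.castSucc), decide (0 ≤ k (Fin.last n'))) ∈ T := by
    intro k hk
    rw [hFm, Finset.mem_filter, Fintype.mem_piFinset] at hk
    rw [hT, Finset.mem_product]
    refine ⟨?_, Finset.mem_univ _⟩
    rw [Fintype.mem_piFinset]
    intro i; exact hk.1 _
  have hinj : Set.InjOn (fun k : Fin (n' + 1) → ℤ =>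
      ((fun i : Fin n' => k i.castSucc), decide (0 ≤ k (Fin.last n')))) ↑Fm := by
    intro k₁ hk₁ k₂ hk₂ heq
    simp only [Finset.mem_coe, hFm, Finset.mem_filter] at hk₁ hk₂
    have h1 : ∀ i : Fin n', k₁ i.castSucc = k₂ i.castSucc := by
      intro i; exact congrFun (congrArg Prod.fst heq) i
    have hsg : (0 ≤ k₁ (Fin.last n')) ↔ (0 ≤ k₂ (Fin.last n')) := by
      have := congrArg Prod.snd heq
      simpa [decide_eq_decide] using this
    have hs1 := hk₁.2
    have hs2 := hk₂.2
    rw [Fin.sum_univ_castSucc] at hs1 hs2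
    have hsum : ∑ i : Fin n', (k₁ i.castSucc).natAbs = ∑ i : Fin n', (k₂ i.castSucc).natAbs := by
      apply Finset.sum_congr rfl; intro i _; rw [h1 i]
    have hlast : (k₁ (Fin.last n')).natAbs = (k₂ (Fin.last n')).natAbs := by omega
    have hlast' : k₁ (Fin.last n') = k₂ (Fin.last n') := by omega
    funext i
    refine Fin.lastCases hlast' (fun j => h1 j) i
  have hcard := Finset.card_le_card_of_injOn _ hmap hinj
  refine le_trans hcard ?_
  rw [hT, Finset.card_product, Fintype.card_piFinset]
  simp only [Int.card_Icc]
  have : ∀ i : Fin n', ((m : ℤ) + 1 - (-(m:ℤ))).toNat = 2 * m + 1 := by intro _; omega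
  rw [Finset.prod_congr rfl (fun i _ => this i), Finset.prod_const, Finset.card_univ]
  simp [Fintype.card_fin]
  omega


private lemma volE_le {τ α σ M₂ Ω₀ bk : ℝ} {l : ℤ} {m : ℕ}
    (hτ : 0 < τ) (hα : 0 < α) (hσ : 0 < σ) (hσhalf : σ ≤ 1/2)
    (hl1 : 1 ≤ |l|) (hl2 : |l| ≤ 2) (hm1 : 1 ≤ m)
    (hM₂ : M₂ = α + 4 * |Ω₀|)
    (hb_low : α / (m : ℝ) ^ τ ≤ |bk|)
    (hc_low : α / (m : ℝ) ^ τ ≤ |bk + (l : ℝ) * Ω₀|)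
    (hΩ : α ≤ |(l : ℝ) * Ω₀|) :
    volume (Set.Icc (-σ) σ ∩
        {lam : ℝ | |(bk + (l : ℝ) * Ω₀) + lam * bk| < α / 2 / (m : ℝ) ^ (2 * τ + 1)})
      ≤ (if α / (2 * σ * M₂) < (m : ℝ) ^ τ then
          ENNReal.ofReal (2 * σ / (m : ℝ) ^ (τ + 1)) else 0) := by
  rcases Set.eq_empty_or_nonempty (Set.Icc (-σ) σ ∩
      {lam : ℝ | |(bk + (l : ℝ) * Ω₀) + lam * bk| < α / 2 / (m : ℝ) ^ (2 * τ + 1)}) with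
    hemp | ⟨lam₀, ⟨hl₀1, hl₀2⟩, hw⟩
  · rw [hemp]; simp
  have hmR : (1 : ℝ) ≤ (m : ℝ) := by exact_mod_cast hm1
  have hmpos : (0 : ℝ) < (m : ℝ) := by linarith
  have hmτ : (0 : ℝ) < (m : ℝ) ^ τ := Real.rpow_pos_of_pos hmpos _
  have hmτ1 : (0 : ℝ) < (m : ℝ) ^ (τ + 1) := Real.rpow_pos_of_pos hmpos _
  have hm2τ : (0 : ℝ) < (m : ℝ) ^ (2 * τ + 1) := Real.rpow_pos_of_pos hmpos _
  have habs : |lam₀| ≤ σ := abs_le.mpr ⟨hl₀1, hl₀2⟩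
  have hw' : |(bk + (l : ℝ) * Ω₀) + lam₀ * bk| < α / 2 / (m : ℝ) ^ (2 * τ + 1) := hw
  have hone : (1 : ℝ) ≤ (m : ℝ) ^ (2 * τ + 1) := by
    calc (1:ℝ) = 1 ^ (2 * τ + 1) := (Real.one_rpow _).symm
      _ ≤ (m : ℝ) ^ (2 * τ + 1) := Real.rpow_le_rpow zero_le_one hmR (by linarith)
  have hmono : (m : ℝ) ^ τ ≤ (m : ℝ) ^ (2 * τ + 1) :=
    Real.rpow_le_rpow_of_exponent_le hmR (by linarith)
  have hη : α / 2 / (m : ℝ) ^ (2 * τ + 1) ≤ α / (m : ℝ) ^ τ / 2 := by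
    rw [show α / (m:ℝ) ^ τ / 2 = α / 2 / (m:ℝ) ^ τ by ring]
    gcongr
  have hηα : α / 2 / (m : ℝ) ^ (2 * τ + 1) ≤ α / 2 :=
    div_le_self (by positivity) hone
  -- lower bound on σ * |bk|
  have t1 := abs_add_le ((bk + (l : ℝ) * Ω₀) + lam₀ * bk) (-(lam₀ * bk))
  rw [add_neg_cancel_right, abs_neg, abs_mul] at t1
  have t2 : |lam₀| * |bk| ≤ σ * |bk| := mul_le_mul_of_nonneg_right habs (abs_nonneg _)
  have hδ1 : α / (m : ℝ) ^ τ / 2 < σ * |bk| := by linarith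
  -- upper bound on |bk|
  have u1 := abs_add_le ((bk + (l : ℝ) * Ω₀) + lam₀ * bk) (-((l : ℝ) * Ω₀))
  rw [show ((bk + (l : ℝ) * Ω₀) + lam₀ * bk) + (-((l : ℝ) * Ω₀)) = (1 + lam₀) * bk by ring,
    abs_neg] at u1
  have hlcast : |(l : ℝ)| ≤ 2 := by
    rw [← Int.cast_abs]; exact_mod_cast hl2
  have hlΩ : |(l : ℝ) * Ω₀| ≤ 2 * |Ω₀| := by
    rw [abs_mul]; exact mul_le_mul_of_nonneg_right hlcast (abs_nonneg _)
  have u2 : (1 / 2 : ℝ) * |bk| ≤ |(1 + lam₀) * bk| := by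
    rw [abs_mul, abs_of_nonneg (by linarith : (0:ℝ) ≤ 1 + lam₀)]
    exact mul_le_mul_of_nonneg_right (by linarith) (abs_nonneg _)
  have hb_up : |bk| ≤ M₂ := by rw [hM₂]; linarith
  -- the if-condition holds
  have hM₂0 : 0 < M₂ := by rw [hM₂]; have := abs_nonneg Ω₀; linarith
  have hcond : α / (2 * σ * M₂) < (m : ℝ) ^ τ := by
    have t3 : α / (m : ℝ) ^ τ / 2 < σ * M₂ :=
      lt_of_lt_of_le hδ1 (mul_le_mul_of_nonneg_left hb_up hσ.le)
    rw [div_div, div_lt_iff₀ (by positivity)] at t3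
    rw [div_lt_iff₀ (by positivity)]
    nlinarith
  rw [if_pos hcond]
  have hbk0 : 0 < |bk| := by nlinarith [div_pos hα hmτ]
  have hbkne : bk ≠ 0 := abs_pos.mp hbk0
  -- inclusion into a ball
  have hsubset : Set.Icc (-σ) σ ∩
      {lam : ℝ | |(bk + (l : ℝ) * Ω₀) + lam * bk| < α / 2 / (m : ℝ) ^ (2 * τ + 1)}
      ⊆ Metric.ball (-((bk + (l : ℝ) * Ω₀) / bk)) (α / 2 / (m : ℝ) ^ (2 * τ + 1) / |bk|) := by
    rintro lam ⟨-, hlam⟩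
    rw [Metric.mem_ball, Real.dist_eq]
    have e1 : lam - (-((bk + (l : ℝ) * Ω₀) / bk)) = ((bk + (l : ℝ) * Ω₀) + lam * bk) / bk := by
      field_simp; ring
    rw [e1, abs_div]
    exact div_lt_div_of_pos_right hlam hbk0
  refine le_trans (le_trans (measure_mono hsubset) (le_of_eq (Real.volume_ball _ _))) ?_
  apply ENNReal.ofReal_le_ofReal
  have hsplit : (m : ℝ) ^ (2 * τ + 1) = (m : ℝ) ^ τ * (m : ℝ) ^ (τ + 1) := by
    rw [show 2 * τ + 1 = τ + (τ + 1) by ring, Real.rpow_add hmpos]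
  have hmul : (α / 2 / (m : ℝ) ^ (2 * τ + 1)) * (m : ℝ) ^ (τ + 1) = α / (m : ℝ) ^ τ / 2 := by
    rw [hsplit]; field_simp
  have hdd : α / 2 / (m : ℝ) ^ (2 * τ + 1) / |bk| ≤ σ / (m : ℝ) ^ (τ + 1) := by
    rw [div_le_div_iff₀ hbk0 hmτ1, hmul]; linarith
  rw [show 2 * σ / (m : ℝ) ^ (τ + 1) = 2 * (σ / (m : ℝ) ^ (τ + 1)) by ring]
  linarith

/-- The Melnikov-type Diophantine set Õ_{α,τ} with one normal frequency (n̄ = 1). -/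
def TildeDio1 (n : ℕ) (α τ : ℝ) : Set ((Fin n → ℝ) × ℝ) :=
  {p | (∀ k : Fin n → ℤ, k ≠ 0 → ∀ l : ℤ, |l| ≤ 2 →
          α / (∑ i, |(k i : ℝ)|) ^ τ ≤ |∑ i, (k i : ℝ) * p.1 i + (l : ℝ) * p.2|) ∧
       (∀ l : ℤ, 1 ≤ |l| → |l| ≤ 2 → α ≤ |(l : ℝ) * p.2|)}

set_option maxHeartbeats 1000000 in
/-- If (ω₀, Ω₀) ∈ Õ_{α,τ} then for sufficiently small σ the set
I⋆_σ = {λ ∈ [−σ,σ] : ((1+λ)ω₀, Ω₀) ∈ Õ_{α/2, 2τ+1}} is non-empty and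
meas([−σ,σ] ∖ I⋆_σ) ≤ c σ (σ/α)^{(τ−n+1)/τ}. -/
theorem stmt11 (n : ℕ) (τ α : ℝ) (hτ : (n : ℝ) - 1 < τ) (hα : 0 < α) (hα1 : α < 1)
    (ω₀ : Fin n → ℝ) (Ω₀ : ℝ) (hdio : (ω₀, Ω₀) ∈ TildeDio1 n α τ) :
    ∃ c > 0, ∃ σ₀ > 0, ∀ σ : ℝ, 0 < σ → σ ≤ σ₀ →
      ∃ S : Set ℝ,
        S = {lam ∈ Set.Icc (-σ) σ | ((1 + lam) • ω₀, Ω₀) ∈ TildeDio1 n (α / 2) (2 * τ + 1)} ∧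
        S.Nonempty ∧
        volume (Set.Icc (-σ) σ \ S)
          ≤ ENNReal.ofReal (c * σ * (σ / α) ^ ((τ - (n : ℝ) + 1) / τ)) := by
  classical
  obtain ⟨hd1, hd2⟩ := hdio
  have hτ1 : 0 < τ + 1 := by
    have : (0:ℝ) ≤ (n : ℝ) := Nat.cast_nonneg n
    linarith
  -- helpers valid for all n
  have hmk1 : ∀ k : Fin n → ℤ, k ≠ 0 → (1:ℝ) ≤ ∑ i, |(k i : ℝ)| := by
    intro k hk
    obtain ⟨i, hi⟩ := Function.ne_iff.mp hk
    have h1 : (1:ℝ) ≤ |(k i : ℝ)| := by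
      have h2 : 1 ≤ |k i| := Int.one_le_abs (by simpa using hi)
      calc (1:ℝ) ≤ ((|k i| : ℤ) : ℝ) := by exact_mod_cast h2
        _ = |(k i : ℝ)| := by push_cast; ring
    exact le_trans h1 (Finset.single_le_sum (f := fun j => |(k j : ℝ)|) (fun j _ => abs_nonneg _) (Finset.mem_univ i))
  have hdivle : ∀ x : ℝ, 1 ≤ x → α / 2 / x ^ (2 * τ + 1) ≤ α / x ^ τ / 2 := by
    intro x hx
    have hx0 : (0:ℝ) < x := lt_of_lt_of_le one_pos hx
    have hp1 : (0:ℝ) < x ^ τ := Real.rpow_pos_of_pos hx0 _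
    have hmono : x ^ τ ≤ x ^ (2 * τ + 1) := Real.rpow_le_rpow_of_exponent_le hx (by linarith)
    rw [show α / x ^ τ / 2 = α / 2 / x ^ τ by ring]
    gcongr
  have hzero_mem : ∀ σ : ℝ, 0 < σ →
      (0:ℝ) ∈ {lam ∈ Set.Icc (-σ) σ |
        ((1 + lam) • ω₀, Ω₀) ∈ TildeDio1 n (α / 2) (2 * τ + 1)} := by
    intro σ hσ
    refine ⟨⟨by linarith, by linarith⟩, ?_⟩
    rw [show (1 + (0:ℝ)) • ω₀ = ω₀ by rw [add_zero, one_smul]]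
    constructor
    · intro k hk l hl
      have h := hd1 k hk l hl
      have h2 := hdivle _ (hmk1 k hk)
      have h3 : (0:ℝ) < (∑ i, |(k i : ℝ)|) ^ τ :=
        Real.rpow_pos_of_pos (lt_of_lt_of_le one_pos (hmk1 k hk)) _
      have h4 : 0 ≤ α / (∑ i, |(k i : ℝ)|) ^ τ := by positivity
      calc α / 2 / (∑ i, |(k i : ℝ)|) ^ (2 * τ + 1)
          ≤ α / (∑ i, |(k i : ℝ)|) ^ τ / 2 := h2
        _ ≤ α / (∑ i, |(k i : ℝ)|) ^ τ := by linarith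
        _ ≤ _ := h
    · intro l h1 h2
      have := hd2 l h1 h2
      simp only at this ⊢
      linarith
  rcases n with _ | n'
  · -- n = 0 : the complement is empty
    refine ⟨1, one_pos, 1/2, by norm_num, ?_⟩
    intro σ hσ hσ₀
    refine ⟨_, rfl, ⟨0, hzero_mem σ hσ⟩, ?_⟩
    have hempty : Set.Icc (-σ) σ \ {lam ∈ Set.Icc (-σ) σ |
        ((1 + lam) • ω₀, Ω₀) ∈ TildeDio1 0 (α / 2) (2 * τ + 1)} = ∅ := by
      rw [Set.diff_eq_empty]
      intro lam hlam
      refine ⟨hlam, ?_, ?_⟩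
      · intro k hk
        exact absurd (funext fun i => i.elim0) hk
      · intro l h1 h2
        have := hd2 l h1 h2
        simp only at this ⊢
        linarith
    rw [hempty]
    simp
  · -- main case n = n' + 1
    have hn0 : (0:ℝ) ≤ (n' : ℝ) := Nat.cast_nonneg n'
    have hτpos : 0 < τ := by push_cast at hτ; linarith
    set M₂ : ℝ := α + 4 * |Ω₀| with hM₂def
    have hΩabs := abs_nonneg Ω₀
    have hM₂0 : 0 < M₂ := by rw [hM₂def]; linarith
    set s : ℝ := τ + 2 - (n' + 1 : ℕ) with hsdef
    have hscast : s = τ + 1 - (n' : ℝ) := by rw [hsdef]; push_cast; ring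
    have hs : 1 < s := by rw [hscast]; push_cast at hτ; linarith
    have hs1 : 0 < s - 1 := by linarith
    set e : ℝ := (τ - ((n' + 1 : ℕ) : ℝ) + 1) / τ with hedef
    have hrpow_e : (0:ℝ) ≤ (2 * M₂) ^ e := Real.rpow_nonneg (by linarith) _
    have h1s : (0:ℝ) < 1 + 1 / (s - 1) := by positivity
    refine ⟨16 * 3 ^ (n' + 1) * (1 + 1 / (s - 1)) * (2 * M₂) ^ e + 1, ?_,
      min (1/2) (α / (2 * M₂)), lt_min (by norm_num) (by positivity), ?_⟩
    · have h16 : (0:ℝ) < 16 * 3 ^ (n' + 1) := by positivity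
      have hnn : (0:ℝ) ≤ 16 * 3 ^ (n' + 1) * (1 + 1 / (s - 1)) * (2 * M₂) ^ e :=
        mul_nonneg (mul_nonneg h16.le h1s.le) hrpow_e
      linarith
    intro σ hσ hσ₀
    have hσhalf : σ ≤ 1/2 := le_trans hσ₀ (min_le_left _ _)
    have hσα : σ ≤ α / (2 * M₂) := le_trans hσ₀ (min_le_right _ _)
    refine ⟨_, rfl, ⟨0, hzero_mem σ hσ⟩, ?_⟩
    set R : ℝ := α / (2 * σ * M₂) with hRdef
    have hR0 : 0 < R := by rw [hRdef]; positivity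
    have hR1 : 1 ≤ R := by
      rw [hRdef, le_div_iff₀ (by positivity)]
      rw [le_div_iff₀ (by linarith : (0:ℝ) < 2 * M₂)] at hσα
      nlinarith
    set Kr : ℝ := R ^ (1/τ) with hKrdef
    have hKr1 : 1 ≤ Kr := by
      rw [hKrdef]
      calc (1:ℝ) = 1 ^ (1/τ) := (Real.one_rpow _).symm
        _ ≤ R ^ (1/τ) := Real.rpow_le_rpow zero_le_one hR1 (by positivity)
    set F : ℕ → Finset (Fin (n'+1) → ℤ) := fun m =>
      (Fintype.piFinset (fun _ : Fin (n'+1) => Finset.Icc (-(m:ℤ)) (m:ℤ))).filter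
        (fun k => ∑ i, (k i).natAbs = m) with hFdef
    set L : Finset ℤ := {-2, -1, 1, 2} with hLdef
    set E : (Fin (n'+1) → ℤ) → ℤ → Set ℝ := fun k l =>
      Set.Icc (-σ) σ ∩ {lam : ℝ |
        |((∑ i, (k i:ℝ) * ω₀ i) + (l:ℝ) * Ω₀) + lam * (∑ i, (k i:ℝ) * ω₀ i)| <
          α / 2 / (∑ i, |(k i : ℝ)|) ^ (2 * τ + 1)} with hEdef
    have hsum_eq : ∀ (lam : ℝ) (k : Fin (n'+1) → ℤ) (l : ℤ),
        ∑ i, (k i:ℝ) * ((1 + lam) • ω₀) i + (l:ℝ) * Ω₀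
          = ((∑ i, (k i:ℝ) * ω₀ i) + (l:ℝ) * Ω₀) + lam * (∑ i, (k i:ℝ) * ω₀ i) := by
      intro lam k l
      have h1 : ∑ i, (k i:ℝ) * ((1 + lam) • ω₀) i = (1 + lam) * ∑ i, (k i:ℝ) * ω₀ i := by
        rw [Finset.mul_sum]
        apply Finset.sum_congr rfl
        intro i _
        simp only [Pi.smul_apply, smul_eq_mul]
        ring
      rw [h1]; ring
    have hmkcast : ∀ k : Fin (n'+1) → ℤ, (∑ i, |(k i : ℝ)|) = ((∑ i, (k i).natAbs : ℕ) : ℝ) := by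
      intro k
      push_cast
      apply Finset.sum_congr rfl
      intro i _
      simp [Nat.cast_natAbs]
    have hcover : Set.Icc (-σ) σ \ {lam | lam ∈ Set.Icc (-σ) σ ∧
          ((1 + lam) • ω₀, Ω₀) ∈ TildeDio1 (n'+1) (α/2) (2*τ+1)}
        ⊆ ⋃ m : ℕ, ⋃ k ∈ F m, ⋃ l ∈ L, E k l := by
      rintro lam ⟨hIcc, hnot⟩
      have hsecond : ∀ l : ℤ, 1 ≤ |l| → |l| ≤ 2 → α/2 ≤ |(l:ℝ) * Ω₀| := by
        intro l h1 h2
        have := hd2 l h1 h2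
        simp only at this
        linarith
      have hfirst : ¬ (∀ k : Fin (n'+1) → ℤ, k ≠ 0 → ∀ l : ℤ, |l| ≤ 2 →
          α/2 / (∑ i, |(k i:ℝ)|) ^ (2*τ+1) ≤ |∑ i, (k i:ℝ) * ((1+lam) • ω₀) i + (l:ℝ) * Ω₀|) := by
        intro h
        exact hnot ⟨hIcc, h, hsecond⟩
      push_neg at hfirst
      obtain ⟨k, hk0, l, hl2, hlt⟩ := hfirst
      rw [hsum_eq lam k l] at hlt
      have hl0 : l ≠ 0 := by
        intro hl0
        subst hl0
        have hb1 : α / (∑ i, |(k i:ℝ)|) ^ τ ≤ |∑ i, (k i:ℝ) * ω₀ i| := by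
          have := hd1 k hk0 0 (by norm_num)
          simpa using this
        have hmk := hmk1 k hk0
        have h2 := hdivle _ hmk
        have h4 : (0:ℝ) ≤ 1 + lam := by have := hIcc.1; linarith
        have h5 : |((∑ i, (k i:ℝ) * ω₀ i) + ((0:ℤ):ℝ) * Ω₀) + lam * (∑ i, (k i:ℝ) * ω₀ i)|
            = (1 + lam) * |∑ i, (k i:ℝ) * ω₀ i| := by
          rw [show ((∑ i, (k i:ℝ) * ω₀ i) + ((0:ℤ):ℝ) * Ω₀) + lam * (∑ i, (k i:ℝ) * ω₀ i)
            = (1 + lam) * (∑ i, (k i:ℝ) * ω₀ i) by push_cast; ring, abs_mul, abs_of_nonneg h4]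
        rw [h5] at hlt
        have h6 : (1:ℝ)/2 ≤ 1 + lam := by have := hIcc.1; linarith
        have h7 : 0 ≤ |∑ i, (k i:ℝ) * ω₀ i| := abs_nonneg _
        nlinarith [hlt, hb1, h2]
      refine Set.mem_iUnion.mpr ⟨∑ i, (k i).natAbs,
        Set.mem_iUnion₂.mpr ⟨k, ?_, Set.mem_iUnion₂.mpr ⟨l, ?_, ⟨hIcc, hlt⟩⟩⟩⟩
      · simp only [hFdef, Finset.mem_filter, Fintype.mem_piFinset]
        refine ⟨fun i => ?_, trivial⟩
        have hle : (k i).natAbs ≤ ∑ j, (k j).natAbs :=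
          Finset.single_le_sum (f := fun j => (k j).natAbs) (fun j _ => Nat.zero_le _)
            (Finset.mem_univ i)
        rw [Finset.mem_Icc]
        omega
      · simp only [hLdef, Finset.mem_insert, Finset.mem_singleton]
        rw [abs_le] at hl2
        omega
    have hE : ∀ m : ℕ, ∀ k ∈ F m, ∀ l ∈ L, volume (E k l) ≤
        (if α / (2 * σ * M₂) < (m:ℝ) ^ τ then
          ENNReal.ofReal (2 * σ / (m:ℝ) ^ (τ + 1)) else 0) := by
      intro m k hkF l hlL
      have hkF' : (∀ i, k i ∈ Finset.Icc (-(m:ℤ)) (m:ℤ)) ∧ (∑ i, (k i).natAbs) = m := by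
        simpa only [hFdef, Finset.mem_filter, Fintype.mem_piFinset] using hkF
      have hksum := hkF'.2
      have hmkm : (∑ i, |(k i : ℝ)|) = (m : ℝ) := by rw [hmkcast, hksum]
      have hll : l = -2 ∨ l = -1 ∨ l = 1 ∨ l = 2 := by
        simpa [hLdef] using hlL
      have hl1 : 1 ≤ |l| := by rcases hll with rfl|rfl|rfl|rfl <;> norm_num
      have hl2 : |l| ≤ 2 := by rcases hll with rfl|rfl|rfl|rfl <;> norm_num
      rcases Nat.eq_zero_or_pos m with hm0 | hm1
      · subst hm0
        have hEmpty : E k l = ∅ := by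
          simp only [hEdef]
          ext lam
          simp only [Set.mem_inter_iff, Set.mem_setOf_eq, Set.mem_empty_iff_false, iff_false,
            not_and]
          intro _
          rw [hmkm, Nat.cast_zero, Real.zero_rpow (by linarith : 2*τ+1 ≠ 0), div_zero]
          exact not_lt.mpr (abs_nonneg _)
        rw [hEmpty]
        simp
      · have hk0 : k ≠ 0 := by
          intro hk
          rw [hk] at hksum
          simp at hksum
          omega
        have hb_low : α / (m:ℝ) ^ τ ≤ |∑ i, (k i:ℝ) * ω₀ i| := by
          have h := hd1 k hk0 0 (by norm_num)
          rw [hmkm] at h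
          simpa using h
        have hc_low : α / (m:ℝ) ^ τ ≤ |(∑ i, (k i:ℝ) * ω₀ i) + (l:ℝ) * Ω₀| := by
          have h := hd1 k hk0 l hl2
          rw [hmkm] at h
          simpa using h
        have hΩl : α ≤ |(l:ℝ) * Ω₀| := by
          have := hd2 l hl1 hl2
          simpa using this
        have hv := volE_le hτpos hα hσ hσhalf hl1 hl2 hm1 hM₂def hb_low hc_low hΩl
        simp only [hEdef]
        rw [hmkm]
        exact hv
    calc volume (Set.Icc (-σ) σ \ {lam | lam ∈ Set.Icc (-σ) σ ∧
            ((1 + lam) • ω₀, Ω₀) ∈ TildeDio1 (n'+1) (α/2) (2*τ+1)})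
        ≤ volume (⋃ m : ℕ, ⋃ k ∈ F m, ⋃ l ∈ L, E k l) := measure_mono hcover
      _ ≤ ∑' m : ℕ, volume (⋃ k ∈ F m, ⋃ l ∈ L, E k l) := measure_iUnion_le _
      _ ≤ ∑' m : ℕ, ∑ k ∈ F m, ∑ l ∈ L, volume (E k l) := by
          apply ENNReal.tsum_le_tsum
          intro m
          refine le_trans (measure_biUnion_finset_le _ _) ?_
          exact Finset.sum_le_sum fun k _ => measure_biUnion_finset_le _ _
      _ ≤ ∑' m : ℕ, (if Kr < (m:ℝ) then
            ENNReal.ofReal ((16 * 3 ^ (n'+1) * σ) * (m:ℝ) ^ (-s)) else 0) := by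
          apply ENNReal.tsum_le_tsum
          intro m
          by_cases hcond : α / (2 * σ * M₂) < (m:ℝ) ^ τ
          · have hm1 : 1 ≤ m := by
              by_contra h
              have hm0 : m = 0 := by omega
              subst hm0
              rw [Nat.cast_zero, Real.zero_rpow (ne_of_gt hτpos)] at hcond
              have : (0:ℝ) < α / (2*σ*M₂) := by positivity
              linarith
            have hmR : (1:ℝ) ≤ (m:ℝ) := by exact_mod_cast hm1
            have hmpos : (0:ℝ) < (m:ℝ) := by linarith
            have hKrm : Kr < (m:ℝ) := by
              have t := Real.rpow_lt_rpow hR0.le hcond (by positivity : (0:ℝ) < 1/τ)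
              have tm : ((m:ℝ) ^ τ) ^ (1/τ) = (m:ℝ) := by
                rw [← Real.rpow_mul hmpos.le, mul_one_div_cancel (ne_of_gt hτpos),
                  Real.rpow_one]
              rw [hKrdef]
              rw [tm] at t
              exact t
            rw [if_pos hKrm]
            refine le_trans (Finset.sum_le_sum fun k hk =>
              Finset.sum_le_sum fun l hl => hE m k hk l hl) ?_
            rw [Finset.sum_const, Finset.sum_const, if_pos hcond]
            rw [nsmul_eq_mul, nsmul_eq_mul]
            have hLcard : L.card = 4 := by rw [hLdef]; rfl
            rw [hLcard]
            have hcard : ((F m).card : ℝ) ≤ 2 * 3 ^ n' * (m:ℝ) ^ (n' : ℕ) := by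
              have h1 := card_sphere_le n' m
              have h21 : 2*m+1 ≤ 3*m := by clear * - hm1; omega
              have h2 : 2 * (2*m+1) ^ n' ≤ 2 * (3*m) ^ n' :=
                Nat.mul_le_mul_left 2 (Nat.pow_le_pow_left h21 n')
              have h3 : (F m).card ≤ 2 * (3 * m) ^ n' := le_trans h1 h2
              calc ((F m).card : ℝ) ≤ ((2 * (3*m)^n' : ℕ) : ℝ) := by exact_mod_cast h3
                _ = 2 * 3 ^ n' * (m:ℝ) ^ (n' : ℕ) := by push_cast; ring
            have hmτ1 : (0:ℝ) < (m:ℝ) ^ (τ+1) := Real.rpow_pos_of_pos hmpos _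
            have hkey : (m:ℝ) ^ (n' : ℕ) * ((m:ℝ) ^ (τ+1))⁻¹ = (m:ℝ) ^ (-s) := by
              rw [← Real.rpow_natCast (m:ℝ) n', ← Real.rpow_neg hmpos.le,
                ← Real.rpow_add hmpos]
              congr 1
              rw [hscast]
              push_cast
              ring
            rw [show ((F m).card : ENNReal) = ENNReal.ofReal ((F m).card) from
              (ENNReal.ofReal_natCast _).symm,
              show ((4:ℕ) : ENNReal) = ENNReal.ofReal 4 by
                rw [ENNReal.ofReal_ofNat]; rfl]
            rw [← ENNReal.ofReal_mul (by positivity), ← ENNReal.ofReal_mul (by positivity)]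
            apply ENNReal.ofReal_le_ofReal
            calc ((F m).card : ℝ) * (4 * (2 * σ / (m:ℝ) ^ (τ+1)))
                = ((F m).card : ℝ) * (8*σ) * ((m:ℝ) ^ (τ+1))⁻¹ := by
                  rw [div_eq_mul_inv]; ring
              _ ≤ (2 * 3 ^ n' * (m:ℝ) ^ (n' : ℕ)) * (8*σ) * ((m:ℝ) ^ (τ+1))⁻¹ := by
                  apply mul_le_mul_of_nonneg_right
                    (mul_le_mul_of_nonneg_right hcard (by positivity)) (by positivity)
              _ = (16 * 3 ^ n' * σ) * ((m:ℝ) ^ (n' : ℕ) * ((m:ℝ) ^ (τ+1))⁻¹) := by ring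
              _ = (16 * 3 ^ n' * σ) * (m:ℝ) ^ (-s) := by rw [hkey]
              _ ≤ (16 * 3 ^ (n'+1) * σ) * (m:ℝ) ^ (-s) := by
                  have hX : (0:ℝ) ≤ (m:ℝ) ^ (-s) := Real.rpow_nonneg hmpos.le _
                  have h3 : (16 * 3 ^ n' * σ : ℝ) ≤ 16 * 3 ^ (n'+1) * σ := by
                    have : (0:ℝ) ≤ 3 ^ n' := by positivity
                    rw [pow_succ]
                    nlinarith
                  exact mul_le_mul_of_nonneg_right h3 hX
          · refine le_trans (Finset.sum_le_sum fun k hk =>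
              Finset.sum_le_sum fun l hl => le_trans (hE m k hk l hl)
                (le_of_eq (if_neg hcond))) ?_
            simp only [Finset.sum_const_zero]
            exact zero_le
      _ ≤ ENNReal.ofReal ((16 * 3 ^ (n'+1) * σ) * (Kr ^ (-s) + Kr ^ (1-s)/(s-1))) :=
          tsum_tail_le hs hKr1 (by positivity)
      _ ≤ ENNReal.ofReal ((16 * 3 ^ (n'+1) * (1 + 1/(s-1)) * (2*M₂) ^ e + 1) * σ * (σ/α) ^ e) := by
          apply ENNReal.ofReal_le_ofReal
          have hτne : τ ≠ 0 := ne_of_gt hτpos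
          have hKs : Kr ^ (-s) ≤ Kr ^ (1-s) :=
            Real.rpow_le_rpow_of_exponent_le hKr1 (by linarith)
          have hKval : Kr ^ (1-s) = (2*M₂) ^ e * (σ/α) ^ e := by
            rw [hKrdef, ← Real.rpow_mul hR0.le]
            rw [show 1/τ * (1-s) = -e by
              rw [hscast, hedef]; push_cast; field_simp; ring]
            rw [Real.rpow_neg hR0.le, ← Real.inv_rpow hR0.le]
            rw [show R⁻¹ = (2*M₂) * (σ/α) by rw [hRdef, inv_div]; ring]
            rw [Real.mul_rpow (by linarith) (by positivity)]
          have hXnn : (0:ℝ) ≤ (σ/α) ^ e := Real.rpow_nonneg (by positivity) _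
          have h1 : Kr ^ (-s) + Kr ^ (1-s)/(s-1) ≤ Kr ^ (1-s) * (1 + 1/(s-1)) := by
            rw [mul_add, mul_one, mul_one_div]
            linarith
          calc (16 * 3 ^ (n'+1) * σ) * (Kr ^ (-s) + Kr ^ (1-s)/(s-1))
              ≤ (16 * 3 ^ (n'+1) * σ) * (Kr ^ (1-s) * (1 + 1/(s-1))) :=
                mul_le_mul_of_nonneg_left h1 (by positivity)
            _ = (16 * 3 ^ (n'+1) * (1 + 1/(s-1)) * (2*M₂) ^ e) * σ * (σ/α) ^ e := by
                rw [hKval]; ring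
            _ ≤ _ := by nlinarith [mul_nonneg hσ.le hXnn]
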